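/- Consider n items of which a fixed set D of k items is defective, and a first stage of T₁ tests arranged in r rounds of T₁/r tests each (with r dividing T₁ and T₁/r ≥ 2): in each round, independently across rounds and across items, each item is placed in one test chosen uniformly at random among the T₁/r tests of that round. Then for a fixed nondefective item i, the probability that in every round the test containing i also contains a defective item equals (1 - (1 - r/T₁)^k)^r. Consequently, the expected total number of tests of conservative two-stage testing with this constant tests-per-item first stage equals T₁ + k + (n-k)·(1 - (1 - r/T₁)^k)^r. -/

import Mathlib

open MeasureTheory ENNReal

section aux
variable {n m : ℕ}

lemma uniform_singleton (h : (Finset.univ : Finset (Fin m)).Nonempty) (v : Fin m) :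
    (PMF.uniformOfFinset Finset.univ h).toMeasure {v} = (m : ℝ≥0∞)⁻¹ := by
  rw [PMF.toMeasure_apply_singleton _ _ (measurableSet_singleton v),
    PMF.uniformOfFinset_apply]
  simp

lemma uniform_compl_singleton (h : (Finset.univ : Finset (Fin m)).Nonempty) (v : Fin m) :
    (PMF.uniformOfFinset Finset.univ h).toMeasure ({v}ᶜ) = 1 - (m : ℝ≥0∞)⁻¹ := by
  rw [prob_compl_eq_one_sub (measurableSet_singleton v), uniform_singleton]

lemma round_measure (hm : 0 < m) (h : (Finset.univ : Finset (Fin m)).Nonempty)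
    (D : Finset (Fin n)) (i : Fin n) (hi : i ∉ D) :
    (Measure.pi fun _ : Fin n => (PMF.uniformOfFinset Finset.univ h).toMeasure)
      {f : Fin n → Fin m | ∃ j ∈ D, f j = f i}
      = 1 - (1 - (m : ℝ≥0∞)⁻¹) ^ D.card := by
  classical
  set μ1 := (PMF.uniformOfFinset (Finset.univ : Finset (Fin m)) h).toMeasure with hμ1
  set ν := Measure.pi fun _ : Fin n => μ1 with hν
  set t : Fin m → Fin n → Set (Fin m) := fun v j =>
    if j = i then {v} else if j ∈ D then {v}ᶜ else Set.univ with ht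
  have hC : {f : Fin n → Fin m | ∀ j ∈ D, f j ≠ f i}
      = ⋃ v : Fin m, Set.univ.pi (t v) := by
    ext f
    simp only [Set.mem_setOf_eq, Set.mem_iUnion, Set.mem_pi, Set.mem_univ, forall_true_left, ht]
    constructor
    · intro hf
      refine ⟨f i, fun j => ?_⟩
      by_cases hji : j = i
      · simp [hji]
      · by_cases hjD : j ∈ D
        · simpa [hji, hjD] using fun hc => hf j hjD hc
        · simp [hji, hjD]
    · rintro ⟨v, hv⟩ j hjD hc
      have hji : j ≠ i := fun e => hi (e ▸ hjD)
      have h1 := hv j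
      have h2 := hv i
      simp [hji, hjD] at h1
      simp at h2
      exact h1 (hc.trans h2)
  have hmeas : ∀ v : Fin m, ν (Set.univ.pi (t v)) = (m : ℝ≥0∞)⁻¹ * (1 - (m : ℝ≥0∞)⁻¹) ^ D.card := by
    intro v
    rw [hν, Measure.pi_pi]
    have : ∀ j : Fin n, μ1 (t v j)
        = if j = i then (m : ℝ≥0∞)⁻¹ else if j ∈ D then 1 - (m : ℝ≥0∞)⁻¹ else 1 := by
      intro j
      by_cases hji : j = i
      · simp only [ht, hji, if_pos rfl]
        exact uniform_singleton h v
      · by_cases hjD : j ∈ D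
        · simp only [ht, if_neg hji, if_pos hjD]
          exact uniform_compl_singleton h v
        · simp [ht, hji, hjD]
    simp_rw [this]
    rw [← Finset.mul_prod_erase Finset.univ _ (Finset.mem_univ i)]
    simp only [if_pos rfl]
    congr 1
    have hsub : D ⊆ Finset.univ.erase i := fun j hj =>
      Finset.mem_erase.mpr ⟨fun e => hi (e ▸ hj), Finset.mem_univ j⟩
    calc ∏ j ∈ Finset.univ.erase i,
          (if j = i then (m : ℝ≥0∞)⁻¹ else if j ∈ D then 1 - (m : ℝ≥0∞)⁻¹ else 1)
        = ∏ j ∈ Finset.univ.erase i, (if j ∈ D then 1 - (m : ℝ≥0∞)⁻¹ else 1) := by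
          refine Finset.prod_congr rfl fun j hj => ?_
          rw [if_neg (Finset.mem_erase.mp hj).1]
      _ = ∏ j ∈ (Finset.univ.erase i) ∩ D, (1 - (m : ℝ≥0∞)⁻¹) := by
          rw [Finset.prod_ite_mem]
      _ = (1 - (m : ℝ≥0∞)⁻¹) ^ D.card := by
          rw [Finset.inter_eq_right.mpr hsub, Finset.prod_const]
  have hdisj : Pairwise (Function.onFun Disjoint fun v : Fin m => Set.univ.pi (t v)) := by
    intro v w hvw
    refine Set.disjoint_left.mpr fun f hfv hfw => hvw ?_
    have h1 := hfv i (Set.mem_univ i)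
    have h2 := hfw i (Set.mem_univ i)
    simp [ht] at h1 h2
    rw [← h1, ← h2]
  have hcompl : ν {f : Fin n → Fin m | ∀ j ∈ D, f j ≠ f i}
      = (1 - (m : ℝ≥0∞)⁻¹) ^ D.card := by
    rw [hC, measure_iUnion hdisj (fun v => (Set.univ.pi (t v)).toFinite.measurableSet)]
    simp_rw [hmeas]
    rw [tsum_fintype, Finset.sum_const, Finset.card_univ, Fintype.card_fin, nsmul_eq_mul,
      ← mul_assoc, ENNReal.mul_inv_cancel (by exact_mod_cast hm.ne') (by simp), one_mul]
  have hset : {f : Fin n → Fin m | ∃ j ∈ D, f j = f i}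
      = {f : Fin n → Fin m | ∀ j ∈ D, f j ≠ f i}ᶜ := by
    ext f; simp
  rw [hset, prob_compl_eq_one_sub
    ({f : Fin n → Fin m | ∀ j ∈ D, f j ≠ f i}.toFinite.measurableSet), hcompl]

end aux

section aux2
variable {n m : ℕ}

lemma full_measure {r : ℕ} (hm : 0 < m) (h : (Finset.univ : Finset (Fin m)).Nonempty)
    (D : Finset (Fin n)) (i : Fin n) (hi : i ∉ D) :
    (Measure.pi fun _ : Fin r => Measure.pi fun _ : Fin n =>
        (PMF.uniformOfFinset Finset.univ h).toMeasure)
      {A : Fin r → Fin n → Fin m | ∀ ρ : Fin r, ∃ j ∈ D, A ρ j = A ρ i}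
      = (1 - (1 - (m : ℝ≥0∞)⁻¹) ^ D.card) ^ r := by
  have hset : {A : Fin r → Fin n → Fin m | ∀ ρ : Fin r, ∃ j ∈ D, A ρ j = A ρ i}
      = Set.univ.pi fun _ : Fin r => {f : Fin n → Fin m | ∃ j ∈ D, f j = f i} := by
    ext A; simp [Set.mem_pi]
  rw [hset, Measure.pi_pi]
  simp_rw [round_measure hm h D i hi]
  rw [Finset.prod_const, Finset.card_univ, Fintype.card_fin]

lemma toReal_p (hm : 0 < m) (k r : ℕ) :
    ((1 - (1 - (m : ℝ≥0∞)⁻¹) ^ k) ^ r).toReal = (1 - (1 - (m : ℝ)⁻¹) ^ k) ^ r := by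
  have h2 : (m : ℝ≥0∞)⁻¹ ≤ 1 := ENNReal.inv_le_one.mpr (by exact_mod_cast hm)
  have h1 : ((1 : ℝ≥0∞) - (m : ℝ≥0∞)⁻¹) ^ k ≤ 1 := pow_le_one' tsub_le_self k
  rw [ENNReal.toReal_pow, ENNReal.toReal_sub_of_le h1 ENNReal.one_ne_top, ENNReal.toReal_one,
    ENNReal.toReal_pow, ENNReal.toReal_sub_of_le h2 ENNReal.one_ne_top, ENNReal.toReal_one,
    ENNReal.toReal_inv, ENNReal.toReal_natCast]

end aux2


/-- Constant tests-per-item first stage under the fixed-`k` prior: a fixed set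
`D` of `k` of the `n` items is defective, and the `T₁` first-stage tests are
arranged in `r` rounds of `T₁/r` tests each (`r ∣ T₁`, `T₁/r ≥ 2`); in each
round each item is independently placed in one uniformly random test of that
round.  For a fixed nondefective item `i`, the probability that in every round
the test containing `i` also contains a defective item is
`(1 - (1 - r/T₁)^k)^r`; consequently the expected total number of tests of
conservative two-stage testing (first stage, plus individual retests of every
defective item and of every nondefective item all of whose tests contain a
defective) is `T₁ + k + (n-k)·(1 - (1 - r/T₁)^k)^r`. -/
theorem constant_tests_per_item_expected_tests (n T₁ r k : ℕ)
    (hr : 0 < r) (hdvd : r ∣ T₁) (hm : 2 ≤ T₁ / r)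
    (D : Finset (Fin n)) (hD : D.card = k) (i : Fin n) (hi : i ∉ D) :
    ((Measure.pi fun _ : Fin r => Measure.pi fun _ : Fin n =>
        (PMF.uniformOfFinset (Finset.univ : Finset (Fin (T₁ / r)))
          ⟨⟨0, by omega⟩, Finset.mem_univ _⟩).toMeasure)
      {A : Fin r → Fin n → Fin (T₁ / r) |
        ∀ ρ : Fin r, ∃ j ∈ D, A ρ j = A ρ i}).toReal
      = (1 - (1 - (r : ℝ) / (T₁ : ℝ)) ^ k) ^ r ∧
    (∫ A : Fin r → Fin n → Fin (T₁ / r),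
        ((T₁ : ℝ) + (Nat.card {i' : Fin n // i' ∈ D ∨
            ∀ ρ : Fin r, ∃ j ∈ D, A ρ j = A ρ i'} : ℝ))
        ∂(Measure.pi fun _ : Fin r => Measure.pi fun _ : Fin n =>
            (PMF.uniformOfFinset (Finset.univ : Finset (Fin (T₁ / r)))
              ⟨⟨0, by omega⟩, Finset.mem_univ _⟩).toMeasure))
      = (T₁ : ℝ) + (k : ℝ) + ((n : ℝ) - (k : ℝ)) *
          (1 - (1 - (r : ℝ) / (T₁ : ℝ)) ^ k) ^ r := by
  classical
  have hm0 : 0 < T₁ / r := by omega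
  have hne : (Finset.univ : Finset (Fin (T₁ / r))).Nonempty :=
    ⟨⟨0, by omega⟩, Finset.mem_univ _⟩
  set μ := (Measure.pi fun _ : Fin r => Measure.pi fun _ : Fin n =>
      (PMF.uniformOfFinset (Finset.univ : Finset (Fin (T₁ / r))) hne).toMeasure) with hμdef
  have hratio : (((T₁ / r : ℕ) : ℝ))⁻¹ = (r : ℝ) / (T₁ : ℝ) := by
    have hT : (T₁ : ℝ) = ((T₁ / r : ℕ) : ℝ) * (r : ℝ) := by
      exact_mod_cast (Nat.div_mul_cancel hdvd).symm
    have hr0 : (r : ℝ) ≠ 0 := Nat.cast_ne_zero.mpr hr.ne'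
    have hm0' : ((T₁ / r : ℕ) : ℝ) ≠ 0 := Nat.cast_ne_zero.mpr hm0.ne'
    rw [hT]
    field_simp
  have key : ∀ i' : Fin n, i' ∉ D →
      (μ {A : Fin r → Fin n → Fin (T₁ / r) |
          ∀ ρ : Fin r, ∃ j ∈ D, A ρ j = A ρ i'}).toReal
        = (1 - (1 - (r : ℝ) / (T₁ : ℝ)) ^ k) ^ r := by
    intro i' hi'
    rw [hμdef, full_measure hm0 hne D i' hi', hD, toReal_p hm0, hratio]
  refine ⟨key i hi, ?_⟩
  have hcard : ∀ A : Fin r → Fin n → Fin (T₁ / r),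
      ((Nat.card {i' : Fin n // i' ∈ D ∨
          ∀ ρ : Fin r, ∃ j ∈ D, A ρ j = A ρ i'}) : ℝ)
        = ∑ i' : Fin n,
            if i' ∈ D ∨ (∀ ρ : Fin r, ∃ j ∈ D, A ρ j = A ρ i') then (1 : ℝ) else 0 := by
    intro A
    rw [Nat.card_eq_fintype_card, Fintype.card_subtype, Finset.card_filter]
    push_cast
    rfl
  have hint : ∀ i' : Fin n, Integrable (fun A : Fin r → Fin n → Fin (T₁ / r) =>
      if i' ∈ D ∨ (∀ ρ : Fin r, ∃ j ∈ D, A ρ j = A ρ i') then (1 : ℝ) else 0) μ :=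
    fun i' => Integrable.of_finite
  have hite : ∀ i' : Fin n,
      (∫ A, (if i' ∈ D ∨ (∀ ρ : Fin r, ∃ j ∈ D, A ρ j = A ρ i') then (1 : ℝ) else 0) ∂μ)
        = (μ {A : Fin r → Fin n → Fin (T₁ / r) |
            i' ∈ D ∨ ∀ ρ : Fin r, ∃ j ∈ D, A ρ j = A ρ i'}).toReal := by
    intro i'
    have heq : (fun A : Fin r → Fin n → Fin (T₁ / r) =>
        if i' ∈ D ∨ (∀ ρ : Fin r, ∃ j ∈ D, A ρ j = A ρ i') then (1 : ℝ) else 0)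
        = Set.indicator {A : Fin r → Fin n → Fin (T₁ / r) |
            i' ∈ D ∨ ∀ ρ : Fin r, ∃ j ∈ D, A ρ j = A ρ i'} (fun _ => (1 : ℝ)) := by
      ext A
      by_cases hA : i' ∈ D ∨ (∀ ρ : Fin r, ∃ j ∈ D, A ρ j = A ρ i')
      · simp [hA, Set.indicator_apply]
      · simp [hA, Set.indicator_apply]
    rw [heq, integral_indicator_const _
      (Set.toFinite _).measurableSet]
    simp
    rfl
  have hprob : IsProbabilityMeasure μ := by infer_instance
  calc (∫ A : Fin r → Fin n → Fin (T₁ / r),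
        ((T₁ : ℝ) + (Nat.card {i' : Fin n // i' ∈ D ∨
            ∀ ρ : Fin r, ∃ j ∈ D, A ρ j = A ρ i'} : ℝ)) ∂μ)
      = (∫ _A : Fin r → Fin n → Fin (T₁ / r), (T₁ : ℝ) ∂μ)
        + ∑ i' : Fin n, (∫ A, (if i' ∈ D ∨
            (∀ ρ : Fin r, ∃ j ∈ D, A ρ j = A ρ i') then (1 : ℝ) else 0) ∂μ) := by
        simp_rw [hcard]
        rw [integral_add (integrable_const _)
          (integrable_finset_sum _ fun i' _ => hint i'),
          integral_finset_sum _ fun i' _ => hint i']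
    _ = (T₁ : ℝ) + ∑ i' : Fin n,
          (μ {A : Fin r → Fin n → Fin (T₁ / r) |
            i' ∈ D ∨ ∀ ρ : Fin r, ∃ j ∈ D, A ρ j = A ρ i'}).toReal := by
        simp_rw [hite]
        simp
    _ = (T₁ : ℝ) + (k : ℝ) + ((n : ℝ) - (k : ℝ)) *
          (1 - (1 - (r : ℝ) / (T₁ : ℝ)) ^ k) ^ r := by
        rw [← Finset.sum_add_sum_compl D]
        have hD1 : ∀ i' ∈ D, (μ {A : Fin r → Fin n → Fin (T₁ / r) |
            i' ∈ D ∨ ∀ ρ : Fin r, ∃ j ∈ D, A ρ j = A ρ i'}).toReal = 1 := by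
          intro i' hi'
          have : {A : Fin r → Fin n → Fin (T₁ / r) |
              i' ∈ D ∨ ∀ ρ : Fin r, ∃ j ∈ D, A ρ j = A ρ i'} = Set.univ :=
            Set.eq_univ_of_forall fun A => Or.inl hi'
          rw [this]
          simp
        have hD2 : ∀ i' ∈ Dᶜ, (μ {A : Fin r → Fin n → Fin (T₁ / r) |
            i' ∈ D ∨ ∀ ρ : Fin r, ∃ j ∈ D, A ρ j = A ρ i'}).toReal
            = (1 - (1 - (r : ℝ) / (T₁ : ℝ)) ^ k) ^ r := by
          intro i' hi'
          rw [Finset.mem_compl] at hi'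
          have : {A : Fin r → Fin n → Fin (T₁ / r) |
              i' ∈ D ∨ ∀ ρ : Fin r, ∃ j ∈ D, A ρ j = A ρ i'}
              = {A : Fin r → Fin n → Fin (T₁ / r) |
                  ∀ ρ : Fin r, ∃ j ∈ D, A ρ j = A ρ i'} := by
            ext A; simp [hi']
          rw [this, key i' hi']
        rw [Finset.sum_congr rfl hD1, Finset.sum_congr rfl hD2,
          Finset.sum_const, Finset.sum_const, Finset.card_compl, hD]
        have hk : k ≤ n := by
          rw [← hD]
          simpa using D.card_le_univ
        simp only [nsmul_eq_mul, mul_one, Fintype.card_fin]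
        rw [Nat.cast_sub hk]
        ring
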